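/- Let F ∈ C³(ℝ) with F'(0) = F''(0) = 0. Then for all λ > 0, all x ∈ ℝ³ with x ≠ 0, and all y ∈ ℝ³: F(λ|x−y|) = F(λ|x|) − λ ⟨y, w(x)⟩ F'(λ|x|) + (λ²/2) [ (|y|² − ⟨y, w(x)⟩²) F'(λ|x|)/(λ|x|) + ⟨y, w(x)⟩² F''(λ|x|) ] + (λ³ |y|³ / 2) ∫₀¹ (1−θ)² [ 3 cos α sin²α ( F'(λ|x−θy|)/(λ²|x−θy|²) − F''(λ|x−θy|)/(λ|x−θy|) ) − cos³α · F'''(λ|x−θy|) ] dθ, where for each θ, cos α = cos α(x,y,θ) is determined by |y| cos α = ⟨y, w(x−θy)⟩, sin²α := 1 − cos²α, and the quotients F'(p)/p², F''(p)/p are understood by their continuous extensions (with values F'''(0)/2 and F'''(0) respectively) at p = 0. -/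

import Mathlib

noncomputable section

open MeasureTheory Real Classical
open scoped RealInnerProductSpace

/-- `w(x) = x/|x|` for `x ≠ 0`, and `w(0) = 0`. -/
noncomputable def wdir (x : EuclideanSpace ℝ (Fin 3)) : EuclideanSpace ℝ (Fin 3) :=
  if x = 0 then 0 else ‖x‖⁻¹ • x

/-- The quotient `F'(p)/p²`, extended continuously by `F'''(0)/2` at `p = 0`
(valid when `F'(0) = F''(0) = 0`). -/
noncomputable def dquot2 (F : ℝ → ℝ) (p : ℝ) : ℝ :=
  if p = 0 then iteratedDeriv 3 F 0 / 2 else deriv F p / p ^ 2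

/-- The quotient `F''(p)/p`, extended continuously by `F'''(0)` at `p = 0`
(valid when `F''(0) = 0`). -/
noncomputable def dquot3 (F : ℝ → ℝ) (p : ℝ) : ℝ :=
  if p = 0 then iteratedDeriv 3 F 0 else iteratedDeriv 2 F p / p

/- ### Auxiliary definitions and lemmas -/

abbrev E3 := EuclideanSpace ℝ (Fin 3)

noncomputable def rr (x y : E3) (θ : ℝ) : ℝ := ‖x - θ • y‖
noncomputable def cc (x y : E3) (θ : ℝ) : ℝ := ⟪y, x - θ • y⟫ / ‖x - θ • y‖

noncomputable def gg0 (F : ℝ → ℝ) (lam : ℝ) (x y : E3) (θ : ℝ) : ℝ := F (lam * rr x y θ)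
noncomputable def gg1 (F : ℝ → ℝ) (lam : ℝ) (x y : E3) (θ : ℝ) : ℝ :=
  -lam * (cc x y θ * deriv F (lam * rr x y θ))
noncomputable def gg2 (F : ℝ → ℝ) (lam : ℝ) (x y : E3) (θ : ℝ) : ℝ :=
  lam * (‖y‖ ^ 2 - cc x y θ ^ 2) * (deriv F (lam * rr x y θ) / rr x y θ)
    + lam ^ 2 * cc x y θ ^ 2 * iteratedDeriv 2 F (lam * rr x y θ)
noncomputable def gg3 (F : ℝ → ℝ) (lam : ℝ) (x y : E3) (θ : ℝ) : ℝ :=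
  3 * lam * cc x y θ * (‖y‖ ^ 2 - cc x y θ ^ 2) * (deriv F (lam * rr x y θ) / rr x y θ ^ 2)
    - 3 * lam ^ 2 * cc x y θ * (‖y‖ ^ 2 - cc x y θ ^ 2) *
        (iteratedDeriv 2 F (lam * rr x y θ) / rr x y θ)
    - lam ^ 3 * cc x y θ ^ 3 * iteratedDeriv 3 F (lam * rr x y θ)
noncomputable def php (F : ℝ → ℝ) (lam : ℝ) (x y : E3) (θ : ℝ) : ℝ :=
  gg0 F lam x y θ + (1 - θ) * gg1 F lam x y θ + (1 - θ) ^ 2 / 2 * gg2 F lam x y θ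

lemma hasDerivAt_rr (x y : E3) (θ : ℝ) (hz : x - θ • y ≠ 0) :
    HasDerivAt (rr x y) (-cc x y θ) θ := by
  have hz' : ‖x - θ • y‖ ^ 2 ≠ 0 := pow_ne_zero _ (norm_ne_zero_iff.mpr hz)
  have h1 : HasDerivAt (fun θ : ℝ => x - θ • y) (-y) θ := by
    simpa using ((hasDerivAt_id θ).smul_const y).const_sub x
  have h3 := h1.norm_sq.sqrt hz'
  have h4 : (fun θ : ℝ => Real.sqrt (‖x - θ • y‖ ^ 2)) = rr x y := by
    funext t; exact Real.sqrt_sq (norm_nonneg _)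
  rw [h4] at h3
  convert h3 using 1
  rw [Real.sqrt_sq (norm_nonneg _)]
  rw [show (inner ℝ (x - θ • y) (-y) : ℝ) = -⟪y, x - θ • y⟫ by
    rw [inner_neg_right, real_inner_comm]]
  unfold cc; field_simp

lemma cc_le (x y : E3) (θ : ℝ) : |cc x y θ| ≤ ‖y‖ := by
  unfold cc
  rcases eq_or_ne (x - θ • y) 0 with h | h
  · simp [h, norm_nonneg]
  · rw [abs_div, abs_of_nonneg (norm_nonneg _), div_le_iff₀ (norm_pos_iff.mpr h)]
    calc |⟪y, x - θ • y⟫| ≤ ‖y‖ * ‖x - θ • y‖ := abs_real_inner_le_norm _ _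
    _ = _ := by ring

lemma hasDerivAt_cc (x y : E3) (θ : ℝ) (hz : x - θ • y ≠ 0) :
    HasDerivAt (cc x y) ((cc x y θ ^ 2 - ‖y‖ ^ 2) / rr x y θ) θ := by
  have hr : rr x y θ ≠ 0 := norm_ne_zero_iff.mpr hz
  have hnum : HasDerivAt (fun θ : ℝ => ⟪y, x - θ • y⟫) (-(‖y‖^2)) θ := by
    have : (fun θ : ℝ => ⟪y, x - θ • y⟫) = fun θ : ℝ => ⟪y, x⟫ - θ * ‖y‖^2 := by
      funext t; rw [inner_sub_right, real_inner_smul_right, real_inner_self_eq_norm_sq]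
    rw [this]
    simpa using ((hasDerivAt_id θ).mul_const (‖y‖^2)).const_sub (⟪y, x⟫ : ℝ)
  have := hnum.div (hasDerivAt_rr x y θ hz) hr
  refine this.congr_deriv ?_
  unfold cc rr at *
  field_simp
  ring

section machine
variable (F : ℝ → ℝ) (lam : ℝ) (x y : E3) (θ : ℝ)
variable (hd1 : ∀ p, HasDerivAt F (deriv F p) p)
  (hd2 : ∀ p, HasDerivAt (deriv F) (iteratedDeriv 2 F p) p)
  (hd3 : ∀ p, HasDerivAt (iteratedDeriv 2 F) (iteratedDeriv 3 F p) p)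
  (hz : x - θ • y ≠ 0)

include hz

lemma hr' : rr x y θ ≠ 0 := norm_ne_zero_iff.mpr hz

include hd1 in
lemma hasDerivAt_gg0 : HasDerivAt (gg0 F lam x y) (gg1 F lam x y θ) θ := by
  have h := (hd1 (lam * rr x y θ)).comp θ ((hasDerivAt_rr x y θ hz).const_mul lam)
  refine h.congr_deriv ?_
  unfold gg1; ring

include hd2 in
lemma hasDerivAt_gg1 : HasDerivAt (gg1 F lam x y) (gg2 F lam x y θ) θ := by
  have hFd := (hd2 (lam * rr x y θ)).comp θ ((hasDerivAt_rr x y θ hz).const_mul lam)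
  have h := (((hasDerivAt_cc x y θ hz).mul hFd).const_mul (-lam))
  refine h.congr_deriv ?_
  unfold gg2
  have hr : rr x y θ ≠ 0 := hr' x y θ hz
  field_simp
  simp only [Function.comp_apply]
  ring

include hd2 hd3 in
lemma hasDerivAt_gg2 : HasDerivAt (gg2 F lam x y) (gg3 F lam x y θ) θ := by
  have hr : rr x y θ ≠ 0 := hr' x y θ hz
  have hA := hasDerivAt_rr x y θ hz
  have hB := hasDerivAt_cc x y θ hz
  have hFd := (hd2 (lam * rr x y θ)).comp θ (hA.const_mul lam)
  have hFdd := (hd3 (lam * rr x y θ)).comp θ (hA.const_mul lam)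
  have t1 := (((hasDerivAt_const θ (‖y‖ ^ 2)).sub (hB.pow 2)).mul (hFd.div hA hr)).const_mul lam
  have t2 := (((hB.pow 2)).mul hFdd).const_mul (lam ^ 2)
  have h := t1.add t2
  simp only [Function.comp_def] at h
  have he : (fun θ => lam * ((‖y‖ ^ 2 - cc x y θ ^ 2) * (deriv F (lam * rr x y θ) / rr x y θ))
      + lam ^ 2 * (cc x y θ ^ 2 * iteratedDeriv 2 F (lam * rr x y θ))) = gg2 F lam x y := by
    funext t; unfold gg2; ring
  rw [← he]
  refine h.congr_deriv ?_
  simp only [Pi.div_apply, Pi.sub_apply, Pi.pow_apply]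
  unfold gg3
  field_simp
  ring

include hd1 hd2 hd3 in
lemma hasDerivAt_php : HasDerivAt (php F lam x y) ((1 - θ) ^ 2 / 2 * gg3 F lam x y θ) θ := by
  have hg0 := hasDerivAt_gg0 F lam x y θ hd1 hz
  have hg1 := hasDerivAt_gg1 F lam x y θ hd2 hz
  have hg2 := hasDerivAt_gg2 F lam x y θ hd2 hd3 hz
  have hlin : HasDerivAt (fun θ : ℝ => 1 - θ) (-1) θ := by
    simpa using (hasDerivAt_id θ).const_sub (1:ℝ)
  have hp1 := hlin.mul hg1
  have hp2 := ((hlin.pow 2).div_const 2).mul hg2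
  have h := (hg0.add hp1).add hp2
  have he : (fun θ => gg0 F lam x y θ + (1 - θ) * gg1 F lam x y θ
      + (1 - θ) ^ 2 / 2 * gg2 F lam x y θ) = php F lam x y := rfl
  rw [← he]
  refine h.congr_deriv ?_
  simp only [Pi.pow_apply]
  ring
end machine

lemma inner_wdir (y z : E3) : ⟪y, wdir z⟫ = ⟪y, z⟫ / ‖z‖ := by
  unfold wdir
  rcases eq_or_ne z 0 with h | h
  · simp [h]
  · rw [if_neg h, real_inner_smul_right]
    field_simp

lemma inner_wdir_cc (x y : E3) (θ : ℝ) : ⟪y, wdir (x - θ • y)⟫ = cc x y θ :=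
  inner_wdir _ _

lemma KK_eq (F : ℝ → ℝ) (lam : ℝ) (x y : E3) (θ : ℝ) (hy : ‖y‖ ≠ 0) (hlam : lam ≠ 0)
    (hr : rr x y θ ≠ 0) :
    lam ^ 3 * ‖y‖ ^ 3 / 2 * ((1 - θ) ^ 2 *
      (3 * (⟪y, wdir (x - θ • y)⟫ / ‖y‖) * (1 - (⟪y, wdir (x - θ • y)⟫ / ‖y‖) ^ 2) *
          (dquot2 F (lam * ‖x - θ • y‖) - dquot3 F (lam * ‖x - θ • y‖))
        - (⟪y, wdir (x - θ • y)⟫ / ‖y‖) ^ 3 * iteratedDeriv 3 F (lam * ‖x - θ • y‖)))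
    = (1 - θ) ^ 2 / 2 * gg3 F lam x y θ := by
  have hlr : lam * ‖x - θ • y‖ ≠ 0 := mul_ne_zero hlam hr
  rw [inner_wdir_cc, dquot2, dquot3, if_neg hlr, if_neg hlr, gg3]
  have hrr : rr x y θ = ‖x - θ • y‖ := rfl
  rw [← hrr]
  field_simp

lemma rr_cont (x y : E3) : Continuous (rr x y) := by
  unfold rr
  exact (continuous_const.sub (continuous_id.smul continuous_const)).norm

lemma ip_cont (x y : E3) : Continuous (fun θ : ℝ => (⟪y, x - θ • y⟫ : ℝ)) :=
  Continuous.inner continuous_const (continuous_const.sub (continuous_id.smul continuous_const))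

lemma S_open (x y : E3) : IsOpen {θ : ℝ | x - θ • y ≠ 0} := by
  have : Continuous (fun θ : ℝ => x - θ • y) :=
    continuous_const.sub (continuous_id.smul continuous_const)
  exact (isOpen_compl_singleton).preimage this

lemma cc_contOn (x y : E3) : ContinuousOn (cc x y) {θ : ℝ | x - θ • y ≠ 0} := by
  unfold cc
  exact (ip_cont x y).continuousOn.div (rr_cont x y).continuousOn
    fun θ hθ => norm_ne_zero_iff.mpr hθ

section cont
variable (F : ℝ → ℝ) (lam : ℝ) (x y : E3)
variable (hc0 : Continuous F) (hc1 : Continuous (deriv F))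
  (hc2 : Continuous (iteratedDeriv 2 F)) (hc3 : Continuous (iteratedDeriv 3 F))

include hc0 in
lemma gg0_cont : Continuous (gg0 F lam x y) :=
  hc0.comp (continuous_const.mul (rr_cont x y))

include hc1 in
lemma gg1_contOn : ContinuousOn (gg1 F lam x y) {θ : ℝ | x - θ • y ≠ 0} := by
  unfold gg1
  exact continuousOn_const.mul ((cc_contOn x y).mul
    ((hc1.comp (continuous_const.mul (rr_cont x y))).continuousOn))

include hc1 hc2 in
lemma gg2_contOn : ContinuousOn (gg2 F lam x y) {θ : ℝ | x - θ • y ≠ 0} := by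
  unfold gg2
  have hrne : ∀ θ ∈ {θ : ℝ | x - θ • y ≠ 0}, rr x y θ ≠ 0 :=
    fun θ hθ => norm_ne_zero_iff.mpr hθ
  exact ((continuousOn_const.mul (continuousOn_const.sub ((cc_contOn x y).pow 2))).mul
      (((hc1.comp (continuous_const.mul (rr_cont x y))).continuousOn).div
        (rr_cont x y).continuousOn hrne)).add
    ((continuousOn_const.mul ((cc_contOn x y).pow 2)).mul
      ((hc2.comp (continuous_const.mul (rr_cont x y))).continuousOn))

include hc1 hc2 hc3 in
lemma gg3_contOn : ContinuousOn (gg3 F lam x y) {θ : ℝ | x - θ • y ≠ 0} := by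
  unfold gg3
  have hrne : ∀ θ ∈ {θ : ℝ | x - θ • y ≠ 0}, rr x y θ ≠ 0 :=
    fun θ hθ => norm_ne_zero_iff.mpr hθ
  have hrne2 : ∀ θ ∈ {θ : ℝ | x - θ • y ≠ 0}, rr x y θ ^ 2 ≠ 0 :=
    fun θ hθ => pow_ne_zero _ (hrne θ hθ)
  refine ContinuousOn.sub (ContinuousOn.sub ?_ ?_) ?_
  · exact (((continuousOn_const.mul (cc_contOn x y)).mul
      (continuousOn_const.sub ((cc_contOn x y).pow 2))).mul
      (((hc1.comp (continuous_const.mul (rr_cont x y))).continuousOn).div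
        ((rr_cont x y).pow 2).continuousOn hrne2))
  · exact (((continuousOn_const.mul (cc_contOn x y)).mul
      (continuousOn_const.sub ((cc_contOn x y).pow 2))).mul
      (((hc2.comp (continuous_const.mul (rr_cont x y))).continuousOn).div
        (rr_cont x y).continuousOn hrne))
  · exact (continuousOn_const.mul ((cc_contOn x y).pow 3)).mul
      ((hc3.comp (continuous_const.mul (rr_cont x y))).continuousOn)

include hc0 hc1 hc2 in
lemma php_contOn : ContinuousOn (php F lam x y) {θ : ℝ | x - θ • y ≠ 0} := by
  unfold php
  exact (((gg0_cont F lam x y hc0).continuousOn).add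
      ((continuousOn_const.sub continuousOn_id).mul (gg1_contOn F lam x y hc1))).add
    ((((continuousOn_const.sub continuousOn_id).pow 2).div_const 2).mul
      (gg2_contOn F lam x y hc1 hc2))

end cont
/-- Taylor-type expansion, Lemma 3.5(iii): for `F ∈ C³(ℝ)` with
`F'(0) = F''(0) = 0`, `λ > 0`, `x ≠ 0` and `y ∈ ℝ³`, the third-order expansion of
`F(λ|x-y|)` holds, where for each `θ`, `|y| cos α = ⟨y, w(x-θy)⟩` and
`sin²α = 1 - cos²α`. -/
theorem stmt10 (F : ℝ → ℝ) (hF : ContDiff ℝ 3 F) (hF0 : deriv F 0 = 0)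
    (hF0' : iteratedDeriv 2 F 0 = 0)
    (lam : ℝ) (hlam : 0 < lam) (x y : EuclideanSpace ℝ (Fin 3)) (hx : x ≠ 0) :
    F (lam * ‖x - y‖) = F (lam * ‖x‖) - lam * ⟪y, wdir x⟫ * deriv F (lam * ‖x‖)
      + lam ^ 2 / 2 *
          ((‖y‖ ^ 2 - ⟪y, wdir x⟫ ^ 2) * (deriv F (lam * ‖x‖) / (lam * ‖x‖))
            + ⟪y, wdir x⟫ ^ 2 * iteratedDeriv 2 F (lam * ‖x‖))
      + lam ^ 3 * ‖y‖ ^ 3 / 2 *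
          ∫ θ in (0 : ℝ)..1, (1 - θ) ^ 2 *
            (3 * (⟪y, wdir (x - θ • y)⟫ / ‖y‖) *
                (1 - (⟪y, wdir (x - θ • y)⟫ / ‖y‖) ^ 2) *
                (dquot2 F (lam * ‖x - θ • y‖) - dquot3 F (lam * ‖x - θ • y‖))
              - (⟪y, wdir (x - θ • y)⟫ / ‖y‖) ^ 3 *
                  iteratedDeriv 3 F (lam * ‖x - θ • y‖)) := by
  -- regularity facts about F
  have hF2 : ContDiff ℝ 2 (deriv F) := by
    have h : ContDiff ℝ ((2 : ℕ) + 1) F := by exact_mod_cast hF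
    exact_mod_cast (contDiff_succ_iff_deriv.mp h).2.2
  have hi2 : iteratedDeriv 2 F = deriv (deriv F) := by
    rw [iteratedDeriv_succ, iteratedDeriv_one]
  have hi3 : iteratedDeriv 3 F = deriv (iteratedDeriv 2 F) := by
    rw [iteratedDeriv_succ]
  have hF1 : ContDiff ℝ 1 (iteratedDeriv 2 F) := by
    rw [hi2]
    have h : ContDiff ℝ ((1 : ℕ) + 1) (deriv F) := by exact_mod_cast hF2
    exact_mod_cast (contDiff_succ_iff_deriv.mp h).2.2
  have hd1 : ∀ p, HasDerivAt F (deriv F p) p :=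
    fun p => (hF.differentiable (by norm_num) p).hasDerivAt
  have hd2 : ∀ p, HasDerivAt (deriv F) (iteratedDeriv 2 F p) p := fun p => by
    rw [hi2]; exact (hF2.differentiable (by norm_num) p).hasDerivAt
  have hd3 : ∀ p, HasDerivAt (iteratedDeriv 2 F) (iteratedDeriv 3 F p) p := fun p => by
    rw [hi3]; exact (hF1.differentiable one_ne_zero p).hasDerivAt
  have hc0 : Continuous F := hF.continuous
  have hc1 : Continuous (deriv F) := hF2.continuous
  have hc2 : Continuous (iteratedDeriv 2 F) := hF1.continuous
  have hc3 : Continuous (iteratedDeriv 3 F) := by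
    rw [hi3]
    have h : ContDiff ℝ ((0 : ℕ) + 1) (iteratedDeriv 2 F) := by exact_mod_cast hF1
    have := (contDiff_succ_iff_deriv.mp h).2.2
    exact this.continuous
  by_cases hy0 : y = 0
  · subst hy0
    simp only [inner_zero_left, norm_zero, zero_div, zero_pow, mul_zero, zero_mul,
      sub_zero, smul_zero, ne_eq, OfNat.ofNat_ne_zero, not_false_eq_true, sub_self]
    norm_num
  -- main case
  have hyn : ‖y‖ ≠ 0 := norm_ne_zero_iff.mpr hy0
  have hlam' : lam ≠ 0 := ne_of_gt hlam
  have hxn : ‖x‖ ≠ 0 := norm_ne_zero_iff.mpr hx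
  set KK : ℝ → ℝ := fun θ => lam ^ 3 * ‖y‖ ^ 3 / 2 * ((1 - θ) ^ 2 *
      (3 * (⟪y, wdir (x - θ • y)⟫ / ‖y‖) * (1 - (⟪y, wdir (x - θ • y)⟫ / ‖y‖) ^ 2) *
          (dquot2 F (lam * ‖x - θ • y‖) - dquot3 F (lam * ‖x - θ • y‖))
        - (⟪y, wdir (x - θ • y)⟫ / ‖y‖) ^ 3 * iteratedDeriv 3 F (lam * ‖x - θ • y‖)))
    with hKKdef
  have key : ∫ θ in (0:ℝ)..1, KK θ = php F lam x y 1 - php F lam x y 0 := by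
    by_cases hcol : ∃ t ∈ Set.Icc (0:ℝ) 1, x = t • y
    · -- collinear case : x = t • y with t ∈ [0,1]
      obtain ⟨t, ht, hxt⟩ := hcol
      have ht0 : 0 < t := by
        rcases ht.1.lt_or_eq with h | h
        · exact h
        · exact absurd (by rw [hxt, ← h, zero_smul]) hx
      have ht1 : t ≤ 1 := ht.2
      have hzb : ∀ θ : ℝ, x - θ • y = (t - θ) • y := fun θ => by rw [hxt, sub_smul]
      have hznz : ∀ θ : ℝ, θ ≠ t → x - θ • y ≠ 0 := by
        intro θ h
        rw [hzb]
        exact smul_ne_zero (sub_ne_zero.mpr (Ne.symm h)) hy0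
      have hrrb : ∀ θ : ℝ, rr x y θ = |t - θ| * ‖y‖ := fun θ => by
        rw [rr, hzb, norm_smul, Real.norm_eq_abs]
      have hrrt : rr x y t = 0 := by rw [hrrb]; simp
      have hcct : cc x y t = 0 := by rw [cc, hzb]; simp
      have hccb1 : ∀ θ : ℝ, θ < t → cc x y θ = ‖y‖ := by
        intro θ h
        have h1 : t - θ ≠ 0 := ne_of_gt (by linarith)
        rw [cc, hzb, real_inner_smul_right, real_inner_self_eq_norm_sq, norm_smul,
          Real.norm_eq_abs, abs_of_pos (by linarith : (0:ℝ) < t - θ),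
          div_eq_iff (mul_ne_zero h1 hyn)]
        ring
      have hccb2 : ∀ θ : ℝ, t < θ → cc x y θ = -‖y‖ := by
        intro θ h
        have h1 : t - θ ≠ 0 := ne_of_lt (by linarith)
        rw [cc, hzb, real_inner_smul_right, real_inner_self_eq_norm_sq, norm_smul,
          Real.norm_eq_abs, abs_of_neg (by linarith : t - θ < 0),
          div_eq_iff (mul_ne_zero (neg_ne_zero.mpr h1) hyn)]
        ring
      -- continuity of php across the singular point
      have hgg1C : Continuous (gg1 F lam x y) := by
        rw [continuous_iff_continuousAt]
        intro θ
        rcases eq_or_ne θ t with rfl | h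
        · have hval : gg1 F lam x y θ = 0 := by rw [gg1, hcct]; ring
          rw [ContinuousAt, hval]
          have hb : Filter.Tendsto (fun θ' => |lam| * (‖y‖ * |deriv F (lam * rr x y θ')|))
              (nhds θ) (nhds 0) := by
            have hcont : Continuous (fun θ' => |lam| * (‖y‖ * |deriv F (lam * rr x y θ')|)) :=
              continuous_const.mul (continuous_const.mul
                ((hc1.comp (continuous_const.mul (rr_cont x y))).abs))
            have h2 := hcont.tendsto θ
            simpa [hrrt, hF0] using h2
          apply squeeze_zero_norm _ hb
          intro θ'
          rw [Real.norm_eq_abs, gg1, abs_mul, abs_mul, abs_neg]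
          have hle := cc_le x y θ'
          have h1 : |lam| * (|cc x y θ'| * |deriv F (lam * rr x y θ')|) ≤
              |lam| * (‖y‖ * |deriv F (lam * rr x y θ')|) := by
            gcongr
          exact h1
        · exact ((gg1_contOn F lam x y hc1).continuousAt ((S_open x y).mem_nhds (hznz θ h)))
      have hgg2E : gg2 F lam x y
          = fun θ => lam ^ 2 * ‖y‖ ^ 2 * iteratedDeriv 2 F (lam * rr x y θ) := by
        funext θ
        rcases lt_trichotomy θ t with h | h | h
        · rw [gg2, hccb1 θ h]; ring
        · rw [gg2, h, hcct, hrrt]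
          simp [hF0']
        · rw [gg2, hccb2 θ h]; ring
      have hgg2C : Continuous (gg2 F lam x y) := by
        rw [hgg2E]
        exact continuous_const.mul (hc2.comp (continuous_const.mul (rr_cont x y)))
      have hphpC : Continuous (php F lam x y) := by
        unfold php
        exact (((gg0_cont F lam x y hc0).add
            ((continuous_const.sub continuous_id).mul hgg1C)).add
          ((((continuous_const.sub continuous_id).pow 2).div_const 2).mul hgg2C))
      -- explicit integrands on the two halves
      set K1 : ℝ → ℝ := fun θ => -(lam ^ 3 * ‖y‖ ^ 3 / 2) * ((1 - θ) ^ 2 *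
          iteratedDeriv 3 F (lam * ((t - θ) * ‖y‖))) with hK1def
      set K2 : ℝ → ℝ := fun θ => (lam ^ 3 * ‖y‖ ^ 3 / 2) * ((1 - θ) ^ 2 *
          iteratedDeriv 3 F (lam * ((θ - t) * ‖y‖))) with hK2def
      have hK1C : Continuous K1 := by
        rw [hK1def]
        exact continuous_const.mul (((continuous_const.sub continuous_id).pow 2).mul
          (hc3.comp (continuous_const.mul
            ((continuous_const.sub continuous_id).mul continuous_const))))
      have hK2C : Continuous K2 := by
        rw [hK2def]
        exact continuous_const.mul (((continuous_const.sub continuous_id).pow 2).mul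
          (hc3.comp (continuous_const.mul
            ((continuous_id.sub continuous_const).mul continuous_const))))
      have hg3K1 : ∀ θ : ℝ, θ < t → (1 - θ) ^ 2 / 2 * gg3 F lam x y θ = K1 θ := by
        intro θ h
        rw [gg3, hccb1 θ h, hrrb θ, abs_of_pos (by linarith : (0:ℝ) < t - θ), hK1def]
        ring
      have hg3K2 : ∀ θ : ℝ, t < θ → (1 - θ) ^ 2 / 2 * gg3 F lam x y θ = K2 θ := by
        intro θ h
        rw [gg3, hccb2 θ h, hrrb θ, abs_of_neg (by linarith : t - θ < 0), neg_sub, hK2def]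
        ring
      have hrne : ∀ θ : ℝ, θ ≠ t → rr x y θ ≠ 0 :=
        fun θ h => norm_ne_zero_iff.mpr (hznz θ h)
      have hKK1 : ∀ θ : ℝ, θ < t → KK θ = K1 θ := by
        intro θ h
        have h1 := KK_eq F lam x y θ hyn hlam' (hrne θ (ne_of_lt h))
        exact h1.trans (hg3K1 θ h)
      have hKK2 : ∀ θ : ℝ, t < θ → KK θ = K2 θ := by
        intro θ h
        have h1 := KK_eq F lam x y θ hyn hlam' (hrne θ (ne_of_gt h))
        exact h1.trans (hg3K2 θ h)
      have hder1 : ∀ θ ∈ Set.Ioo (0:ℝ) t, HasDerivAt (php F lam x y) (K1 θ) θ := by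
        intro θ hθ
        have h := hasDerivAt_php F lam x y θ hd1 hd2 hd3 (hznz θ (ne_of_lt hθ.2))
        rwa [hg3K1 θ hθ.2] at h
      have hder2 : ∀ θ ∈ Set.Ioo t 1, HasDerivAt (php F lam x y) (K2 θ) θ := by
        intro θ hθ
        have h := hasDerivAt_php F lam x y θ hd1 hd2 hd3 (hznz θ (ne_of_gt hθ.1))
        rwa [hg3K2 θ hθ.1] at h
      have hFTC1 : ∫ θ in (0:ℝ)..t, K1 θ = php F lam x y t - php F lam x y 0 :=
        intervalIntegral.integral_eq_sub_of_hasDerivAt_of_le ht0.le hphpC.continuousOn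
          hder1 (hK1C.intervalIntegrable 0 t)
      have hFTC2 : ∫ θ in t..1, K2 θ = php F lam x y 1 - php F lam x y t :=
        intervalIntegral.integral_eq_sub_of_hasDerivAt_of_le ht1 hphpC.continuousOn
          hder2 (hK2C.intervalIntegrable t 1)
      have hae : ∀ᵐ θ : ℝ ∂volume, θ ≠ t := by
        have hm : (volume : Measure ℝ) {t} = 0 := measure_singleton t
        have hset : {a : ℝ | ¬ a ≠ t} = {t} := by ext a; simp
        rw [MeasureTheory.ae_iff, hset]
        exact hm
      have hint1 : ∫ θ in (0:ℝ)..t, KK θ = ∫ θ in (0:ℝ)..t, K1 θ := by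
        apply intervalIntegral.integral_congr_ae
        filter_upwards [hae] with θ hθ hmem
        rw [Set.uIoc_of_le ht0.le] at hmem
        exact hKK1 θ (lt_of_le_of_ne hmem.2 hθ)
      have hint2 : ∫ θ in t..1, KK θ = ∫ θ in t..1, K2 θ := by
        apply intervalIntegral.integral_congr_ae
        filter_upwards [hae] with θ hθ hmem
        rw [Set.uIoc_of_le ht1] at hmem
        exact hKK2 θ hmem.1
      have hii1 : IntervalIntegrable KK volume 0 t := by
        apply (hK1C.intervalIntegrable 0 t).congr_ae
        rw [Filter.EventuallyEq]; rw [ae_restrict_iff' measurableSet_uIoc]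
        filter_upwards [hae] with θ hθ hmem
        rw [Set.uIoc_of_le ht0.le] at hmem
        exact (hKK1 θ (lt_of_le_of_ne hmem.2 hθ)).symm
      have hii2 : IntervalIntegrable KK volume t 1 := by
        apply (hK2C.intervalIntegrable t 1).congr_ae
        rw [Filter.EventuallyEq]; rw [ae_restrict_iff' measurableSet_uIoc]
        filter_upwards [hae] with θ hθ hmem
        rw [Set.uIoc_of_le ht1] at hmem
        exact (hKK2 θ hmem.1).symm
      have hsplit := intervalIntegral.integral_add_adjacent_intervals hii1 hii2
      rw [← hsplit, hint1, hint2, hFTC1, hFTC2]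
      ring
    · -- non-collinear case : no singularity on [0,1]
      push_neg at hcol
      have hNZ : ∀ θ ∈ Set.Icc (0:ℝ) 1, x - θ • y ≠ 0 := by
        intro θ hθ h
        exact hcol θ hθ (by rwa [sub_eq_zero] at h)
      have hsub : Set.Icc (0:ℝ) 1 ⊆ {θ : ℝ | x - θ • y ≠ 0} := fun θ hθ => hNZ θ hθ
      have hder : ∀ θ ∈ Set.Ioo (0:ℝ) 1, HasDerivAt (php F lam x y) (KK θ) θ := by
        intro θ hθ
        have hz := hNZ θ (Set.mem_Icc_of_Ioo hθ)
        have h := hasDerivAt_php F lam x y θ hd1 hd2 hd3 hz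
        rw [← KK_eq F lam x y θ hyn hlam' (norm_ne_zero_iff.mpr hz)] at h
        exact h
      have hKKcont : ContinuousOn KK (Set.Icc (0:ℝ) 1) := by
        apply ContinuousOn.congr (f := fun θ : ℝ => (1 - θ) ^ 2 / 2 * gg3 F lam x y θ)
        · exact (((continuousOn_const.sub continuousOn_id).pow 2).div_const 2).mul
            ((gg3_contOn F lam x y hc1 hc2 hc3).mono hsub)
        · intro θ hθ
          rw [hKKdef]
          simpa using KK_eq F lam x y θ hyn hlam'
            (norm_ne_zero_iff.mpr (hNZ θ hθ))
      exact intervalIntegral.integral_eq_sub_of_hasDerivAt_of_le zero_le_one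
        ((php_contOn F lam x y hc0 hc1 hc2).mono hsub) hder
        (by
          apply ContinuousOn.intervalIntegrable
          rwa [Set.uIcc_of_le zero_le_one])
  -- assemble
  have hconst : lam ^ 3 * ‖y‖ ^ 3 / 2 *
      (∫ θ in (0:ℝ)..1, (1 - θ) ^ 2 *
        (3 * (⟪y, wdir (x - θ • y)⟫ / ‖y‖) * (1 - (⟪y, wdir (x - θ • y)⟫ / ‖y‖) ^ 2) *
            (dquot2 F (lam * ‖x - θ • y‖) - dquot3 F (lam * ‖x - θ • y‖))
          - (⟪y, wdir (x - θ • y)⟫ / ‖y‖) ^ 3 * iteratedDeriv 3 F (lam * ‖x - θ • y‖)))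
      = ∫ θ in (0:ℝ)..1, KK θ := by
    rw [hKKdef, ← intervalIntegral.integral_const_mul]
  have hphp1 : php F lam x y 1 = F (lam * ‖x - y‖) := by
    unfold php gg0 rr
    norm_num [one_smul]
  have hphp0 : php F lam x y 0 = F (lam * ‖x‖) - lam * ⟪y, wdir x⟫ * deriv F (lam * ‖x‖)
      + lam ^ 2 / 2 *
          ((‖y‖ ^ 2 - ⟪y, wdir x⟫ ^ 2) * (deriv F (lam * ‖x‖) / (lam * ‖x‖))
            + ⟪y, wdir x⟫ ^ 2 * iteratedDeriv 2 F (lam * ‖x‖)) := by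
    have hx0 : x - (0:ℝ) • y = x := by rw [zero_smul, sub_zero]
    have hrr0 : rr x y 0 = ‖x‖ := by rw [rr, hx0]
    have hcc0 : cc x y 0 = ⟪y, wdir x⟫ := by
      rw [cc, hx0, inner_wdir]
    unfold php gg0 gg1 gg2
    rw [hrr0, hcc0]
    field_simp
    ring
  rw [hconst, key, hphp1, hphp0]
  ring
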